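/- arXiv:2602.08287 — 3 statements merged into one kernel-verified Lean document; each statement's English description precedes it below -/
import Mathlib

section
/- For jointly Gaussian random variables (X,Y) with mean zero, unit variances, and correlation ρ ∈ (-1,1), the expectation E[max(0,X)·max(0,Y)] equals (1/(2π))(√(1-ρ²) + ρ(π - arccos ρ)). -/
open Real MeasureTheory Set Filter

lemma one_sub_mul_sin_pos {ρ : ℝ} (hρ : ρ ∈ Set.Ioo (-1:ℝ) 1) (x : ℝ) :
    0 < 1 - ρ * Real.sin x := by
  obtain ⟨h1, h2⟩ := hρ
  have h3 : ρ * Real.sin x ≤ |ρ * Real.sin x| := le_abs_self _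
  rw [abs_mul] at h3
  nlinarith [Real.abs_sin_le_one x, abs_nonneg ρ, abs_lt.mpr ⟨h1, h2⟩]

lemma hasDerivAt_G {ρ s : ℝ} (hρ : ρ ∈ Set.Ioo (-1:ℝ) 1) (hs : s = Real.sqrt (1 - ρ^2))
    {φ : ℝ} (hc : Real.cos (φ/2) ≠ 0) :
    HasDerivAt (fun φ => (1/(1-ρ^2)) * (-(Real.cos φ)/(1-ρ*Real.sin φ))
        + (2*ρ/(s*(1-ρ^2))) * Real.arctan ((Real.tan (φ/2) - ρ)/s))
      (Real.sin φ/(1-ρ*Real.sin φ)^2) φ := by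
  obtain ⟨hρ1, hρ2⟩ := hρ
  have h1 : (0:ℝ) < 1 - ρ^2 := by nlinarith
  have hspos : 0 < s := hs ▸ Real.sqrt_pos.2 h1
  have hs2 : s^2 = 1 - ρ^2 := by rw [hs]; exact Real.sq_sqrt h1.le
  have hg : 0 < 1 - ρ * Real.sin φ := one_sub_mul_sin_pos ⟨hρ1, hρ2⟩ φ
  -- derivative of first part
  have d1 : HasDerivAt (fun φ => -(Real.cos φ)/(1-ρ*Real.sin φ))
      ((Real.sin φ - ρ)/(1-ρ*Real.sin φ)^2) φ := by
    have hnum : HasDerivAt (fun φ => -(Real.cos φ)) (Real.sin φ) φ := by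
      exact (Real.hasDerivAt_cos φ).neg.congr_deriv (neg_neg _)
    have hden : HasDerivAt (fun φ => 1 - ρ*Real.sin φ) (-(ρ * Real.cos φ)) φ := by
      simpa using ((Real.hasDerivAt_sin φ).const_mul ρ).const_sub 1
    have := hnum.div hden hg.ne'
    refine this.congr_deriv ?_
    have := Real.sin_sq_add_cos_sq φ
    field_simp
    congr 1
    linear_combination (-ρ) * this
  -- derivative of arctan part
  have dhalf : HasDerivAt (fun φ : ℝ => φ/2) (1/2) φ := by
    simpa using (hasDerivAt_id φ).div_const 2
  have dtan : HasDerivAt (fun φ => Real.tan (φ/2)) (1/Real.cos (φ/2)^2 * (1/2)) φ :=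
    HasDerivAt.comp (h₂ := Real.tan) φ (Real.hasDerivAt_tan hc) dhalf
  have du : HasDerivAt (fun φ => (Real.tan (φ/2) - ρ)/s) (1/Real.cos (φ/2)^2 * (1/2) / s) φ :=
    (dtan.sub_const ρ).div_const s
  have d2 : HasDerivAt (fun φ => Real.arctan ((Real.tan (φ/2) - ρ)/s))
      (1/(1 + ((Real.tan (φ/2) - ρ)/s)^2) * (1/Real.cos (φ/2)^2 * (1/2) / s)) φ :=
    (Real.hasDerivAt_arctan _).comp φ du
  have := (d1.const_mul (1/(1-ρ^2))).add (d2.const_mul (2*ρ/(s*(1-ρ^2))))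
  refine this.congr_deriv ?_
  -- algebra
  have hsin : Real.sin φ = 2 * Real.sin (φ/2) * Real.cos (φ/2) := by
    rw [← Real.sin_two_mul]; congr 1; ring
  have hpy : Real.sin (φ/2)^2 + Real.cos (φ/2)^2 = 1 := Real.sin_sq_add_cos_sq _
  have htan : Real.tan (φ/2) = Real.sin (φ/2) / Real.cos (φ/2) := Real.tan_eq_sin_div_cos _
  have hA : 1 + ((Real.tan (φ/2) - ρ)/s)^2
      = (1 - ρ*Real.sin φ)/(s^2 * Real.cos (φ/2)^2) := by
    rw [htan, hsin]
    field_simp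
    linear_combination (Real.cos (φ/2)^2) * hs2 + hpy
  have key : (1/(1 + ((Real.tan (φ/2) - ρ)/s)^2)) * (1/Real.cos (φ/2)^2*(1/2)/s)
      = s/(2*(1-ρ*Real.sin φ)) := by
    rw [hA, one_div_div]
    field_simp
  rw [key]
  field_simp
  ring


lemma arctan_identity {ρ s : ℝ} (hρ : ρ ∈ Set.Ioo (-1:ℝ) 1) (hs : s = Real.sqrt (1 - ρ^2)) :
    2*(Real.arctan ((1-ρ)/s) + Real.arctan (ρ/s)) = π - Real.arccos ρ := by
  obtain ⟨hρ1, hρ2⟩ := hρ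
  have h1 : (0:ℝ) < 1 - ρ^2 := by nlinarith
  have hspos : 0 < s := hs ▸ Real.sqrt_pos.2 h1
  have e1 : Real.arctan (ρ/s) = Real.arcsin ρ := by
    rw [hs]; exact (Real.arcsin_eq_arctan ⟨hρ1, hρ2⟩).symm
  have hα1 : 0 < Real.arccos ρ := Real.arccos_pos.2 hρ2
  have hα2 : Real.arccos ρ < π := by
    rw [Real.arccos_eq_pi_div_two_sub_arcsin]
    have := Real.neg_pi_div_two_lt_arcsin.2 hρ1
    linarith
  set α := Real.arccos ρ with hα
  have hcos : Real.cos α = ρ := Real.cos_arccos hρ1.le hρ2.le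
  have hsin : Real.sin α = s := by rw [hs]; exact Real.sin_arccos ρ
  have hchalf : 0 < Real.cos (α/2) :=
    Real.cos_pos_of_mem_Ioo ⟨by linarith [Real.pi_pos], by linarith⟩
  have hshalf : 0 < Real.sin (α/2) := Real.sin_pos_of_pos_of_lt_pi (by linarith) (by linarith)
  have hd1 : s = 2 * Real.sin (α/2) * Real.cos (α/2) := by
    rw [← hsin, ← Real.sin_two_mul]; congr 1; ring
  have hd2 : ρ = 2 * Real.cos (α/2)^2 - 1 := by
    have h := Real.cos_two_mul (α/2)
    rw [show 2*(α/2) = α by ring] at h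
    rw [← hcos, h]
  have hpy : Real.sin (α/2)^2 + Real.cos (α/2)^2 = 1 := Real.sin_sq_add_cos_sq _
  have e2 : Real.arctan ((1-ρ)/s) = α/2 := by
    have htan : (1-ρ)/s = Real.tan (α/2) := by
      rw [Real.tan_eq_sin_div_cos, hd1, hd2]
      rw [div_eq_div_iff (by positivity) hchalf.ne']
      nlinarith [hpy]
    rw [htan, Real.arctan_tan (by linarith [Real.pi_pos]) (by linarith)]
  rw [e1, e2, Real.arccos_eq_pi_div_two_sub_arcsin] at *
  linarith

lemma sin_div_sq_integral {ρ s : ℝ} (hρ : ρ ∈ Set.Ioo (-1:ℝ) 1) (hs : s = Real.sqrt (1 - ρ^2)) :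
    ∫ φ in (0:ℝ)..(π/2), Real.sin φ/(1-ρ*Real.sin φ)^2
      = (1/(1-ρ^2)) * (1 + (ρ/s) * (π - Real.arccos ρ)) := by
  obtain ⟨hρ1, hρ2⟩ := hρ
  have h1 : (0:ℝ) < 1 - ρ^2 := by nlinarith
  have hspos : 0 < s := hs ▸ Real.sqrt_pos.2 h1
  have hderiv : ∀ x ∈ Set.uIcc (0:ℝ) (π/2),
      HasDerivAt (fun φ => (1/(1-ρ^2)) * (-(Real.cos φ)/(1-ρ*Real.sin φ))
          + (2*ρ/(s*(1-ρ^2))) * Real.arctan ((Real.tan (φ/2) - ρ)/s))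
        (Real.sin x/(1-ρ*Real.sin x)^2) x := by
    intro x hx
    rw [Set.uIcc_of_le (by positivity)] at hx
    refine hasDerivAt_G ⟨hρ1, hρ2⟩ hs ?_
    have : 0 < Real.cos (x/2) := by
      apply Real.cos_pos_of_mem_Ioo
      constructor
      · nlinarith [hx.1, Real.pi_pos]
      · nlinarith [hx.2, Real.pi_pos]
    exact this.ne'
  have hcont : Continuous (fun φ : ℝ => Real.sin φ/(1-ρ*Real.sin φ)^2) := by
    apply Real.continuous_sin.div (by continuity)
    intro x
    exact pow_ne_zero _ (one_sub_mul_sin_pos ⟨hρ1, hρ2⟩ x).ne'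
  rw [intervalIntegral.integral_eq_sub_of_hasDerivAt hderiv (hcont.intervalIntegrable _ _)]
  rw [Real.cos_pi_div_two, Real.sin_pi_div_two, show (π/2)/2 = π/4 by ring,
    Real.tan_pi_div_four, Real.cos_zero, Real.sin_zero,
    show (0:ℝ)/2 = 0 by norm_num, Real.tan_zero]
  have harc := arctan_identity ⟨hρ1, hρ2⟩ hs
  rw [show (0 - ρ)/s = -(ρ/s) by ring, Real.arctan_neg]
  field_simp
  linear_combination (ρ * (1-ρ)) * harc


section TEST
variable {ρ s : ℝ}

lemma hcontf (hρ : ρ ∈ Set.Ioo (-1:ℝ) 1) :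
    Continuous (fun φ : ℝ => Real.sin φ/(1-ρ*Real.sin φ)^2) := by
  apply Real.continuous_sin.div (by continuity)
  intro x
  exact pow_ne_zero _ (one_sub_mul_sin_pos hρ x).ne'

lemma intJ (hρ : ρ ∈ Set.Ioo (-1:ℝ) 1) (hs : s = Real.sqrt (1 - ρ^2)) :
    ∫ θ in (0:ℝ)..(π/2), Real.sin (2*θ)/(1-ρ*Real.sin (2*θ))^2
      = (1/(1-ρ^2)) * (1 + (ρ/s) * (π - Real.arccos ρ)) := by
  have hcont := hcontf hρ
  set f : ℝ → ℝ := fun φ => Real.sin φ/(1-ρ*Real.sin φ)^2 with hf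
  have comp : ∫ θ in (0:ℝ)..(π/2), f (2*θ) = (2:ℝ)⁻¹ • ∫ φ in (0:ℝ)..π, f φ := by
    have := intervalIntegral.integral_comp_mul_left f (two_ne_zero) (a := 0) (b := π/2)
    rw [this, show 2*(π/2) = π by ring, show (2:ℝ)*0 = 0 by ring]
  have hrefl : ∫ φ in (π/2:ℝ)..π, f φ = ∫ φ in (0:ℝ)..(π/2), f φ := by
    have h2 := intervalIntegral.integral_comp_sub_left f π (a := 0) (b := π/2)
    rw [show π - π/2 = π/2 by ring, sub_zero] at h2
    rw [← h2]
    apply intervalIntegral.integral_congr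
    intro x _
    simp only [hf, Real.sin_pi_sub]
  have split : ∫ φ in (0:ℝ)..π, f φ
      = (∫ φ in (0:ℝ)..(π/2), f φ) + ∫ φ in (π/2:ℝ)..π, f φ :=
    (intervalIntegral.integral_add_adjacent_intervals
      (hcont.intervalIntegrable _ _) (hcont.intervalIntegrable _ _)).symm
  rw [comp, split, hrefl, sin_div_sq_integral hρ hs]
  rw [smul_eq_mul]
  ring

end TEST


lemma cube_gauss {b : ℝ} (hb : 0 < b) :
    ∫ r in Ioi (0:ℝ), r ^ 3 * Real.exp (-b * r ^ 2) = 1 / (2 * b ^ 2) := by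
  have hF : ∀ x ∈ Ici (0:ℝ), HasDerivAt (fun r : ℝ => -(r ^ 2 / (2 * b) + 1 / (2 * b ^ 2)) * Real.exp (-b * r ^ 2))
      (x ^ 3 * Real.exp (-b * x ^ 2)) x := by
    intro x _
    have h1 : HasDerivAt (fun r : ℝ => -(r ^ 2 / (2 * b) + 1 / (2 * b ^ 2))) (-(x / b)) x := by
      have : HasDerivAt (fun r : ℝ => r ^ 2) (2 * x) x := by
        simpa using (hasDerivAt_pow 2 x)
      have := ((this.div_const (2 * b)).add_const (1 / (2 * b ^ 2))).neg
      refine this.congr_deriv ?_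
      field_simp
    have h2 : HasDerivAt (fun r : ℝ => Real.exp (-b * r ^ 2)) (-b * (2 * x) * Real.exp (-b * x ^ 2)) x := by
      have hq : HasDerivAt (fun r : ℝ => -b * r ^ 2) (-b * (2 * x)) x := by
        simpa using (hasDerivAt_pow 2 x).const_mul (-b)
      simpa [mul_comm] using hq.exp
    have := h1.mul h2
    refine this.congr_deriv ?_
    field_simp
    ring
  have hint : IntegrableOn (fun r : ℝ => r ^ 3 * Real.exp (-b * r ^ 2)) (Ioi 0) := by
    have := integrableOn_rpow_mul_exp_neg_mul_sq hb (s := 3) (by norm_num)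
    refine this.congr_fun (fun x hx => ?_) measurableSet_Ioi
    norm_num [Real.rpow_natCast]
  have htend : Tendsto (fun r : ℝ => -(r ^ 2 / (2 * b) + 1 / (2 * b ^ 2)) * Real.exp (-b * r ^ 2)) atTop (nhds 0) := by
    have t1 : Tendsto (fun r : ℝ => b * r ^ 2) atTop atTop := by
      exact (tendsto_pow_atTop (by norm_num)).const_mul_atTop hb
    have t2 : Tendsto (fun y : ℝ => y * Real.exp (-y)) atTop (nhds 0) := by
      simpa using tendsto_pow_mul_exp_neg_atTop_nhds_zero 1
    have t3 : Tendsto (fun r : ℝ => (b * r ^ 2) * Real.exp (-(b * r ^ 2))) atTop (nhds 0) := t2.comp t1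
    have t4 : Tendsto (fun r : ℝ => Real.exp (-(b * r ^ 2))) atTop (nhds 0) :=
      (tendsto_exp_neg_atTop_nhds_zero).comp t1
    have : Tendsto (fun r : ℝ => -((1 / (2 * b ^ 2)) * ((b * r ^ 2) * Real.exp (-(b * r ^ 2))) + (1 / (2 * b ^ 2)) * Real.exp (-(b * r ^ 2)))) atTop (nhds (-((1 / (2 * b ^ 2)) * 0 + (1 / (2 * b ^ 2)) * 0))) := by
      exact ((t3.const_mul _).add (t4.const_mul _)).neg
    simp only [mul_zero, add_zero, neg_zero] at this
    refine this.congr (fun r => ?_)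
    field_simp
  have := integral_Ioi_of_hasDerivAt_of_tendsto' hF hint htend
  rw [this]
  norm_num

section MAIN
open Real MeasureTheory Set Filter

lemma cube_int {b : ℝ} (hb : 0 < b) :
    IntegrableOn (fun r : ℝ => r ^ 3 * Real.exp (-b * r ^ 2)) (Set.Ioi 0) := by
  have := integrableOn_rpow_mul_exp_neg_mul_sq hb (s := 3) (by norm_num)
  refine this.congr_fun (fun x hx => ?_) measurableSet_Ioi
  norm_num [Real.rpow_natCast]

lemma quad_bound {ρ : ℝ} (x y : ℝ) : (1-|ρ|)*(x^2+y^2) ≤ x^2 - 2*ρ*x*y + y^2 := by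
  have h1 : ρ*(x*y) ≤ |ρ| * (|x| * |y|) := by
    calc ρ*(x*y) ≤ |ρ*(x*y)| := le_abs_self _
    _ = |ρ| * (|x| * |y|) := by rw [abs_mul, abs_mul]
  nlinarith [sq_nonneg (|x| - |y|), sq_abs x, sq_abs y, abs_nonneg ρ]

/-- Noise stability of ReLU: for a bivariate Gaussian pair with correlation
`ρ ∈ (-1,1)`, `E[ReLU(X)·ReLU(Y)] = (1/(2π))(√(1-ρ²) + ρ(π - arccos ρ))`,
expressed as an integral against the explicit bivariate normal density. -/
theorem relu_noise_stability (ρ : ℝ) (hρ : ρ ∈ Set.Ioo (-1 : ℝ) 1) :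
    (∫ p : ℝ × ℝ,
        max 0 p.1 * max 0 p.2 *
          (1 / (2 * π * Real.sqrt (1 - ρ ^ 2)) *
            Real.exp (-(p.1 ^ 2 - 2 * ρ * p.1 * p.2 + p.2 ^ 2) / (2 * (1 - ρ ^ 2)))))
      = 1 / (2 * π) * (Real.sqrt (1 - ρ ^ 2) + ρ * (π - Real.arccos ρ)) := by
  obtain ⟨hρ1, hρ2⟩ := hρ
  have h1 : (0:ℝ) < 1 - ρ^2 := by nlinarith
  set s := Real.sqrt (1-ρ^2) with hs
  have hspos : 0 < s := Real.sqrt_pos.2 h1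
  have hs2 : s^2 = 1-ρ^2 := Real.sq_sqrt h1.le
  have hπ := Real.pi_pos
  have habs : |ρ| < 1 := abs_lt.2 ⟨hρ1, hρ2⟩
  set c := 1/(2*π*s) with hc
  have hcpos : 0 < c := by positivity
  set k := (1-|ρ|)/(2*(1-ρ^2)) with hk
  have hkpos : 0 < k := div_pos (by linarith) (by linarith)
  set f : ℝ × ℝ → ℝ := fun p => max 0 p.1 * max 0 p.2 *
      (c * Real.exp (-(p.1 ^ 2 - 2 * ρ * p.1 * p.2 + p.2 ^ 2) / (2 * (1 - ρ ^ 2)))) with hfdef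
  -- continuity
  have hfc : Continuous f := by
    apply Continuous.mul
    · exact (continuous_const.max continuous_fst).mul (continuous_const.max continuous_snd)
    · exact continuous_const.mul (Real.continuous_exp.comp ((Continuous.neg (by fun_prop)).div_const _))
  -- exponential bound
  have hexp : ∀ x y : ℝ, Real.exp (-(x^2 - 2*ρ*x*y + y^2)/(2*(1-ρ^2)))
      ≤ Real.exp (-k*x^2) * Real.exp (-k*y^2) := by
    intro x y
    rw [← Real.exp_add, Real.exp_le_exp]
    have hq := quad_bound (ρ := ρ) x y
    have h2 : (0:ℝ) < 2*(1-ρ^2) := by linarith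
    have hq2 : k*x^2 + k*y^2 ≤ (x^2 - 2*ρ*x*y + y^2) * (2*(1-ρ^2))⁻¹ := by
      have := mul_le_mul_of_nonneg_right hq (inv_pos.2 h2).le
      calc k*x^2 + k*y^2 = (1-|ρ|)*(x^2+y^2) * (2*(1-ρ^2))⁻¹ := by rw [hk]; ring
        _ ≤ _ := this
    have hq3 : -(x^2 - 2*ρ*x*y + y^2)/(2*(1-ρ^2))
        = -((x^2 - 2*ρ*x*y + y^2) * (2*(1-ρ^2))⁻¹) := by ring
    rw [hq3]
    linarith
  have hf_nonneg : ∀ p : ℝ × ℝ, 0 ≤ f p := by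
    intro p
    apply mul_nonneg (mul_nonneg (le_max_left _ _) (le_max_left _ _))
    positivity
  -- integrability of f
  have hbound : ∀ p : ℝ × ℝ, ‖f p‖
      ≤ |p.1| * Real.exp (-k*p.1^2) * (c * (|p.2| * Real.exp (-k*p.2^2))) := by
    intro ⟨x, y⟩
    rw [Real.norm_eq_abs, abs_of_nonneg (hf_nonneg _)]
    calc max 0 x * max 0 y * (c * Real.exp (-(x^2 - 2*ρ*x*y + y^2)/(2*(1-ρ^2))))
        ≤ |x| * |y| * (c * (Real.exp (-k*x^2) * Real.exp (-k*y^2))) := by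
          apply mul_le_mul
          · exact mul_le_mul (max_le (abs_nonneg x) (le_abs_self x))
              (max_le (abs_nonneg y) (le_abs_self y)) (le_max_left _ _) (abs_nonneg x)
          · exact mul_le_mul_of_nonneg_left (hexp x y) hcpos.le
          · positivity
          · positivity
      _ = |x| * Real.exp (-k*x^2) * (c * (|y| * Real.exp (-k*y^2))) := by ring
  have i1 : Integrable (fun x : ℝ => |x| * Real.exp (-k*x^2)) := by
    refine (integrable_mul_exp_neg_mul_sq hkpos).abs.congr (ae_of_all _ fun x => ?_)
    simp only [abs_mul, abs_of_pos (Real.exp_pos _)]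
  have i2 : Integrable (fun y : ℝ => c * (|y| * Real.exp (-k*y^2))) := i1.const_mul c
  have hfint : Integrable f := by
    have hprod := i1.mul_prod i2
    rw [← Measure.volume_eq_prod] at hprod
    exact hprod.mono' hfc.aestronglyMeasurable (ae_of_all _ hbound)
  -- polar coordinates
  rw [← integral_comp_polarCoord_symm f]
  set g : ℝ × ℝ → ℝ := fun q => q.1 • f (q.1 * Real.cos q.2, q.1 * Real.sin q.2) with hgdef
  have hchg : (∫ p in polarCoord.target, p.1 • f (polarCoord.symm p)) =
      ∫ q in Set.Ioi (0:ℝ) ×ˢ Set.Ioo (-π) π, g q := rfl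
  rw [hchg]
  have hgc : Continuous g := by
    apply continuous_fst.smul
    exact hfc.comp ((continuous_fst.mul (Real.continuous_cos.comp continuous_snd)).prodMk
      (continuous_fst.mul (Real.continuous_sin.comp continuous_snd)))
  -- bound for g on the target
  have hgbound : ∀ q ∈ Set.Ioi (0:ℝ) ×ˢ Set.Ioo (-π) π,
      ‖g q‖ ≤ c * (q.1^3 * Real.exp (-k * q.1^2)) * 1 := by
    rintro ⟨r, θ⟩ ⟨hr, -⟩
    have hr : (0:ℝ) < r := hr
    have hpy := Real.sin_sq_add_cos_sq θ
    have e1 : max 0 (r * Real.cos θ) ≤ r := by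
      apply max_le hr.le
      calc r * Real.cos θ ≤ |r * Real.cos θ| := le_abs_self _
        _ = r * |Real.cos θ| := by rw [abs_mul, abs_of_pos hr]
        _ ≤ r * 1 := by
            exact mul_le_mul_of_nonneg_left (Real.abs_cos_le_one θ) hr.le
        _ = r := mul_one r
    have e2 : max 0 (r * Real.sin θ) ≤ r := by
      apply max_le hr.le
      calc r * Real.sin θ ≤ |r * Real.sin θ| := le_abs_self _
        _ = r * |Real.sin θ| := by rw [abs_mul, abs_of_pos hr]
        _ ≤ r * 1 := mul_le_mul_of_nonneg_left (Real.abs_sin_le_one θ) hr.le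
        _ = r := mul_one r
    have e3 : Real.exp (-((r*Real.cos θ)^2 - 2*ρ*(r*Real.cos θ)*(r*Real.sin θ)
        + (r*Real.sin θ)^2)/(2*(1-ρ^2))) ≤ Real.exp (-k * r^2) := by
      rw [Real.exp_le_exp]
      have hq := quad_bound (ρ := ρ) (r*Real.cos θ) (r*Real.sin θ)
      have hsum : (r*Real.cos θ)^2 + (r*Real.sin θ)^2 = r^2 := by
        linear_combination r^2 * hpy
      rw [hsum] at hq
      have h2 : (0:ℝ) < 2*(1-ρ^2) := by linarith
      have hq2 : k*r^2 ≤ ((r*Real.cos θ)^2 - 2*ρ*(r*Real.cos θ)*(r*Real.sin θ)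
          + (r*Real.sin θ)^2) * (2*(1-ρ^2))⁻¹ := by
        have := mul_le_mul_of_nonneg_right hq (inv_pos.2 h2).le
        calc k*r^2 = (1-|ρ|)*r^2 * (2*(1-ρ^2))⁻¹ := by rw [hk]; ring
          _ ≤ _ := this
      have hq3 : -((r*Real.cos θ)^2 - 2*ρ*(r*Real.cos θ)*(r*Real.sin θ)
          + (r*Real.sin θ)^2)/(2*(1-ρ^2))
          = -(((r*Real.cos θ)^2 - 2*ρ*(r*Real.cos θ)*(r*Real.sin θ)
          + (r*Real.sin θ)^2) * (2*(1-ρ^2))⁻¹) := by ring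
      rw [hq3]
      linarith
    have e4 : f (r * Real.cos θ, r * Real.sin θ) ≤ r * r * (c * Real.exp (-k * r^2)) := by
      apply mul_le_mul
      · exact mul_le_mul e1 e2 (le_max_left _ _) hr.le
      · exact mul_le_mul_of_nonneg_left e3 hcpos.le
      · positivity
      · positivity
    rw [Real.norm_eq_abs, hgdef]
    simp only [smul_eq_mul]
    rw [abs_of_nonneg (mul_nonneg hr.le (hf_nonneg _)), mul_one]
    calc r * f (r * Real.cos θ, r * Real.sin θ)
        ≤ r * (r * r * (c * Real.exp (-k * r^2))) := mul_le_mul_of_nonneg_left e4 hr.le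
      _ = c * (r^3 * Real.exp (-k * r^2)) := by ring
  have i3 : IntegrableOn (fun r : ℝ => c * (r^3 * Real.exp (-k * r^2))) (Set.Ioi 0) :=
    (cube_int hkpos).const_mul c
  have i4 : IntegrableOn (fun _ : ℝ => (1:ℝ)) (Set.Ioo (-π) π) := by
    refine integrableOn_const ?_
    rw [Real.volume_Ioo]
    exact ENNReal.ofReal_ne_top
  have hgint : IntegrableOn g (Set.Ioi (0:ℝ) ×ˢ Set.Ioo (-π) π) := by
    have hprod := i3.mul_prod i4
    rw [Measure.prod_restrict, ← Measure.volume_eq_prod] at hprod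
    refine hprod.mono' hgc.aestronglyMeasurable.restrict ?_
    rw [ae_restrict_iff' (measurableSet_Ioi.prod measurableSet_Ioo)]
    exact ae_of_all _ hgbound
  -- Fubini and swap
  rw [Measure.volume_eq_prod, setIntegral_prod g (by rwa [← Measure.volume_eq_prod])]
  rw [MeasureTheory.integral_integral_swap (f := fun r θ => g (r, θ)) (by
    rw [Measure.prod_restrict]
    have : Function.uncurry (fun r θ => g (r, θ)) = g := rfl
    rw [this]
    rwa [← Measure.volume_eq_prod])]
  -- inner integral
  have hinner_zero : ∀ θ ∈ Set.Ioo (-π) π \ Set.Ioo 0 (π/2),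
      (∫ r in Set.Ioi (0:ℝ), g (r, θ)) = 0 := by
    rintro θ ⟨⟨hθ1, hθ2⟩, hθ3⟩
    rw [Set.mem_Ioo, not_and_or] at hθ3
    have hzero : ∀ r ∈ Set.Ioi (0:ℝ), g (r, θ) = 0 := by
      intro r hr
      have hr : (0:ℝ) < r := hr
      rcases hθ3 with h | h
      · push_neg at h
        have : Real.sin θ ≤ 0 := Real.sin_nonpos_of_nonpos_of_neg_pi_le h hθ1.le
        have hmax : max 0 (r * Real.sin θ) = 0 :=
          max_eq_left (mul_nonpos_of_nonneg_of_nonpos hr.le this)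
        simp only [hgdef, hfdef, smul_eq_mul, hmax]
        ring
      · push_neg at h
        have : Real.cos θ ≤ 0 :=
          Real.cos_nonpos_of_pi_div_two_le_of_le h (by linarith)
        have hmax : max 0 (r * Real.cos θ) = 0 :=
          max_eq_left (mul_nonpos_of_nonneg_of_nonpos hr.le this)
        simp only [hgdef, hfdef, smul_eq_mul, hmax]
        ring
    rw [setIntegral_congr_fun measurableSet_Ioi hzero]
    simp
  have hinner_val : ∀ θ ∈ Set.Ioo (0:ℝ) (π/2),
      (∫ r in Set.Ioi (0:ℝ), g (r, θ))
        = (c*(1-ρ^2)^2) * (Real.sin (2*θ)/(1-ρ*Real.sin (2*θ))^2) := by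
    rintro θ ⟨hθ1, hθ2⟩
    have hcosθ : 0 < Real.cos θ := Real.cos_pos_of_mem_Ioo ⟨by linarith, hθ2⟩
    have hsinθ : 0 < Real.sin θ := Real.sin_pos_of_pos_of_lt_pi hθ1 (by linarith)
    set b := (1 - ρ*Real.sin (2*θ))/(2*(1-ρ^2)) with hb
    have hbpos : 0 < b := div_pos (one_sub_mul_sin_pos ⟨hρ1, hρ2⟩ (2*θ)) (by linarith)
    have hpy := Real.sin_sq_add_cos_sq θ
    have hcongr : ∀ r ∈ Set.Ioi (0:ℝ),
        g (r, θ) = (Real.cos θ * Real.sin θ * c) * (r^3 * Real.exp (-b * r^2)) := by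
      intro r hr
      have hr : (0:ℝ) < r := hr
      have hm1 : max 0 (r * Real.cos θ) = r * Real.cos θ := max_eq_right (by positivity)
      have hm2 : max 0 (r * Real.sin θ) = r * Real.sin θ := max_eq_right (by positivity)
      have hearg : -((r*Real.cos θ)^2 - 2*ρ*(r*Real.cos θ)*(r*Real.sin θ)
          + (r*Real.sin θ)^2)/(2*(1-ρ^2)) = -b * r^2 := by
        rw [hb, Real.sin_two_mul]
        field_simp
        linear_combination (-1) * hpy
      simp only [hgdef, hfdef, smul_eq_mul, hm1, hm2, hearg]
      ring
    rw [setIntegral_congr_fun measurableSet_Ioi hcongr, MeasureTheory.integral_const_mul,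
      cube_gauss hbpos]
    rw [hb, Real.sin_two_mul]
    have hd : (1 - ρ*(2*Real.sin θ*Real.cos θ)) ≠ 0 := by
      have := one_sub_mul_sin_pos ⟨hρ1, hρ2⟩ (2*θ)
      rw [Real.sin_two_mul] at this
      linarith
    field_simp
  rw [setIntegral_eq_of_subset_of_forall_diff_eq_zero measurableSet_Ioo
    (fun x hx => ⟨by cases hx; linarith, by cases hx; linarith⟩) hinner_zero]
  rw [setIntegral_congr_fun measurableSet_Ioo hinner_val]
  rw [MeasureTheory.integral_const_mul, ← integral_Ioc_eq_integral_Ioo,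
    ← intervalIntegral.integral_of_le (by linarith : (0:ℝ) ≤ π/2)]
  rw [intJ ⟨hρ1, hρ2⟩ hs]
  rw [hc, ← hs2]
  field_simp
end MAIN
end

section
/- If f ∈ L²(γ) satisfies ⟨f, H_n⟩_{L²(γ)} = 0 for every n ∈ ℕ, where H_n are the physicists' Hermite polynomials, then f = 0 almost everywhere with respect to γ. In particular the Hermite polynomials span a dense subspace of L²(γ). -/
open Real MeasureTheory

/-- Physicists' Hermite polynomials via the Rodrigues formula. -/
noncomputable def physHermite (n : ℕ) (x : ℝ) : ℝ :=
  (-1 : ℝ) ^ n * Real.exp (x ^ 2) * iteratedDeriv n (fun t => Real.exp (-t ^ 2)) x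

/-- The Gaussian measure `dγ(x) = π^{-1/2} e^{-x²} dx` on `ℝ`. -/
noncomputable def gaussMeasure : Measure ℝ :=
  volume.withDensity fun x => ENNReal.ofReal (π ^ (-(1 : ℝ) / 2) * Real.exp (-x ^ 2))

open Polynomial FourierTransform
open scoped ENNReal NNReal Nat ContDiff

/-! ### The Hermite polynomials as actual polynomials -/

noncomputable def PH : ℕ → Polynomial ℝ
  | 0 => 1
  | (n + 1) => 2 * Polynomial.X * PH n - Polynomial.derivative (PH n)

lemma hasDerivAt_gauss (x : ℝ) :
    HasDerivAt (fun t : ℝ => Real.exp (-t ^ 2)) (-2 * x * Real.exp (-x ^ 2)) x := by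
  have h : HasDerivAt (fun t : ℝ => -t ^ 2) (-(2 * x)) x := by
    simpa using ((hasDerivAt_pow 2 x)).fun_neg
  simpa [mul_comm, mul_assoc, mul_left_comm] using h.exp

lemma iteratedDeriv_gauss (n : ℕ) (x : ℝ) :
    iteratedDeriv n (fun t => Real.exp (-t ^ 2)) x
      = (-1 : ℝ) ^ n * (PH n).eval x * Real.exp (-x ^ 2) := by
  induction n generalizing x with
  | zero => simp [PH]
  | succ n ih =>
    rw [iteratedDeriv_succ]
    have : deriv (iteratedDeriv n (fun t => Real.exp (-t ^ 2))) x
        = deriv (fun y => (-1 : ℝ) ^ n * (PH n).eval y * Real.exp (-y ^ 2)) x := by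
      apply Filter.EventuallyEq.deriv_eq
      filter_upwards with y using ih y
    rw [this]
    have h1 : HasDerivAt (fun y => (-1 : ℝ) ^ n * (PH n).eval y * Real.exp (-y ^ 2))
        ((-1 : ℝ) ^ n * ((Polynomial.derivative (PH n)).eval x * Real.exp (-x ^ 2)
          + (PH n).eval x * (-2 * x * Real.exp (-x ^ 2)))) x := by
      have hp : HasDerivAt (fun y => (PH n).eval y)
          ((Polynomial.derivative (PH n)).eval x) x := (PH n).hasDerivAt x
      have := (hp.mul (hasDerivAt_gauss x)).const_mul ((-1 : ℝ) ^ n)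
      simpa [mul_assoc] using this
    rw [h1.deriv, PH]
    simp only [Polynomial.eval_sub, Polynomial.eval_mul, Polynomial.eval_ofNat,
      Polynomial.eval_X, pow_succ]
    ring

lemma physHermite_eq (n : ℕ) (x : ℝ) : physHermite n x = (PH n).eval x := by
  rw [physHermite, iteratedDeriv_gauss]
  rw [show (-1:ℝ)^n * Real.exp (x^2) * ((-1:ℝ)^n * (PH n).eval x * Real.exp (-x^2))
    = ((-1:ℝ)^n)^2 * (PH n).eval x * (Real.exp (x^2) * Real.exp (-x^2)) by ring]
  rw [← Real.exp_add]
  simp [← pow_mul, mul_comm]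

lemma PH_deg (n : ℕ) : (PH n).natDegree = n ∧ (PH n).coeff n = 2 ^ n := by
  induction n with
  | zero => simp [PH]
  | succ n ih =>
    obtain ⟨hd, hc⟩ := ih
    have hPHne : PH n ≠ 0 := by
      intro h
      rw [h, Polynomial.coeff_zero] at hc
      exact (by positivity : (0:ℝ) < 2 ^ n).ne hc
    have hd1 : (2 * Polynomial.X * PH n).natDegree = n + 1 := by
      rw [show (2 : Polynomial ℝ) * Polynomial.X * PH n
          = Polynomial.C 2 * (Polynomial.X * PH n) by
        rw [show (Polynomial.C (2:ℝ)) = 2 from map_ofNat _ _]; ring]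
      rw [Polynomial.natDegree_C_mul (by norm_num),
        Polynomial.natDegree_X_mul hPHne, hd]
    have hdd : (Polynomial.derivative (PH n)).natDegree < n + 1 :=
      lt_of_le_of_lt (Polynomial.natDegree_derivative_le _) (by omega)
    constructor
    · rw [PH]
      rw [Polynomial.natDegree_sub_eq_left_of_natDegree_lt (by rw [hd1]; exact hdd)]
      exact hd1
    · rw [PH, Polynomial.coeff_sub, Polynomial.coeff_eq_zero_of_natDegree_lt hdd]
      have h2 : ((2 : Polynomial ℝ) * Polynomial.X * PH n).coeff (n + 1)
          = 2 * (PH n).coeff n := by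
        rw [mul_assoc, show (2:Polynomial ℝ) = Polynomial.C 2 from (map_ofNat _ _).symm,
          Polynomial.coeff_C_mul, Polynomial.coeff_X_mul]
      rw [h2, hc]
      ring

/-! ### The Gaussian measure -/

noncomputable def gdens (x : ℝ) : ℝ := π ^ (-(1 : ℝ) / 2) * Real.exp (-x ^ 2)

lemma gdens_pos (x : ℝ) : 0 < gdens x := by
  have := Real.pi_pos
  unfold gdens
  positivity

lemma gdens_meas : Measurable gdens := by
  unfold gdens
  fun_prop

lemma gaussMeasure_eq :
    gaussMeasure = volume.withDensity fun x => ((gdens x).toNNReal : ℝ≥0∞) := rfl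

lemma integral_gauss (g : ℝ → ℝ) :
    ∫ x, g x ∂gaussMeasure = ∫ x, g x * gdens x := by
  rw [gaussMeasure_eq, integral_withDensity_eq_integral_smul
    (gdens_meas.real_toNNReal) g]
  congr 1
  funext x
  rw [NNReal.smul_def, Real.coe_toNNReal _ (gdens_pos x).le, smul_eq_mul, mul_comm]

lemma integrable_gauss_iff (g : ℝ → ℝ) :
    Integrable g gaussMeasure ↔ Integrable (fun x => g x * gdens x) volume := by
  rw [gaussMeasure_eq]
  have h := integrable_withDensity_iff (μ := (volume : Measure ℝ))
    (f := fun x => ((gdens x).toNNReal : ℝ≥0∞))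
    (by exact gdens_meas.real_toNNReal.coe_nnreal_ennreal)
    (Filter.Eventually.of_forall fun x => ENNReal.coe_lt_top) (g := g)
  simpa [Real.coe_toNNReal _ (gdens_pos _).le] using h

lemma integrable_pow_gauss (i : ℕ) :
    Integrable (fun x : ℝ => x ^ i * Real.exp (-x ^ 2)) volume := by
  have := integrable_rpow_mul_exp_neg_mul_sq (b := 1) one_pos
    (s := (i : ℝ)) (lt_of_lt_of_le (by norm_num) (Nat.cast_nonneg i))
  simpa [Real.rpow_natCast] using this

lemma integrable_poly_gauss (p : Polynomial ℝ) :
    Integrable (fun x : ℝ => p.eval x * Real.exp (-x ^ 2)) volume := by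
  have : (fun x : ℝ => p.eval x * Real.exp (-x ^ 2))
      = fun x => ∑ i ∈ Finset.range (p.natDegree + 1),
          p.coeff i * (x ^ i * Real.exp (-x ^ 2)) := by
    funext x
    rw [Polynomial.eval_eq_sum_range, Finset.sum_mul]
    simp [mul_assoc]
  rw [this]
  exact integrable_finset_sum _ fun i _ => (integrable_pow_gauss i).const_mul _

lemma integrable_poly_gaussMeasure (p : Polynomial ℝ) :
    Integrable (fun x : ℝ => p.eval x) gaussMeasure := by
  rw [integrable_gauss_iff]
  have h := (integrable_poly_gauss p).const_mul (π ^ (-(1 : ℝ) / 2))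
  apply h.congr
  filter_upwards with x
  unfold gdens
  ring

lemma memℒp_poly (p : Polynomial ℝ) :
    MemLp (fun x : ℝ => p.eval x) 2 gaussMeasure := by
  rw [memLp_two_iff_integrable_sq (p.continuous.aestronglyMeasurable)]
  have h := integrable_poly_gaussMeasure (p * p)
  apply h.congr
  filter_upwards with x
  simp [sq]

lemma mul_L2_integrable {u v : ℝ → ℝ} (hu : MemLp u 2 gaussMeasure)
    (hv : MemLp v 2 gaussMeasure) :
    Integrable (fun x => u x * v x) gaussMeasure := by
  have h := hv.smul hu (p := 2) (q := 2) (r := 1)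
    (hpqr := ⟨by rw [inv_one, ENNReal.inv_two_add_inv_two]⟩)
  rw [memLp_one_iff_integrable] at h
  exact h.congr (Filter.Eventually.of_forall fun x => by
    simp [Pi.smul_apply, smul_eq_mul, mul_comm])

lemma integrable_exp_abs_gauss (a : ℝ) :
    Integrable (fun x : ℝ => Real.exp (a * |x|) * Real.exp (-x ^ 2)) volume := by
  have hInt : Integrable
      (fun x : ℝ => Real.exp (a ^ 2 / 2) * Real.exp (-(1/2 : ℝ) * x ^ 2)) volume :=
    (integrable_exp_neg_mul_sq (by norm_num)).const_mul _
  apply hInt.mono'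
  · exact (((continuous_const.mul continuous_abs).rexp).mul
      ((continuous_neg.comp (continuous_pow 2)).rexp)).aestronglyMeasurable
  · filter_upwards with x
    rw [Real.norm_eq_abs, abs_of_pos (by positivity), ← Real.exp_add, ← Real.exp_add]
    apply Real.exp_le_exp.mpr
    nlinarith [sq_nonneg (a - |x|), sq_abs x]

lemma memℒp_exp_abs (c : ℝ) :
    MemLp (fun x : ℝ => Real.exp (c * |x|)) 2 gaussMeasure := by
  rw [memLp_two_iff_integrable_sq
    (show AEStronglyMeasurable (fun x : ℝ => Real.exp (c * |x|)) gaussMeasure from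
      (continuous_const.mul continuous_abs).rexp.aestronglyMeasurable)]
  rw [integrable_gauss_iff]
  have h := (integrable_exp_abs_gauss (2 * c)).const_mul (π ^ (-(1 : ℝ) / 2))
  apply h.congr
  filter_upwards with x
  unfold gdens
  have h2 : Real.exp (c * |x|) ^ 2 = Real.exp (2 * c * |x|) := by
    rw [sq, ← Real.exp_add]; congr 1; ring
  rw [h2]
  ring

/-! ### Main theorem -/

/-- If `f ∈ L²(γ)` is orthogonal to every Hermite polynomial, then `f = 0`
γ-almost everywhere (completeness of the Hermite basis). -/
theorem hermite_complete (f : ℝ → ℝ) (hf : MemLp f 2 gaussMeasure)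
    (horth : ∀ n : ℕ, (∫ x, f x * physHermite n x ∂gaussMeasure) = 0) :
    f =ᵐ[gaussMeasure] 0 := by
  -- integrability of `f` against any polynomial
  have hint : ∀ p : Polynomial ℝ,
      Integrable (fun x => f x * p.eval x) gaussMeasure :=
    fun p => mul_L2_integrable hf (memℒp_poly p)
  -- orthogonality to the polynomials `PH n`
  have h0 : ∀ n : ℕ, ∫ x, f x * (PH n).eval x ∂gaussMeasure = 0 := by
    intro n
    have := horth n
    simp_rw [physHermite_eq] at this
    exact this
  -- orthogonality to all polynomials, by induction on the degree
  have hpoly : ∀ p : Polynomial ℝ, ∫ x, f x * p.eval x ∂gaussMeasure = 0 := by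
    have main : ∀ N : ℕ, ∀ p : Polynomial ℝ, p.natDegree ≤ N →
        ∫ x, f x * p.eval x ∂gaussMeasure = 0 := by
      intro N
      induction N with
      | zero =>
        intro p hp
        have hpC : p = Polynomial.C (p.coeff 0) :=
          Polynomial.eq_C_of_natDegree_le_zero hp
        rw [hpC]
        have heq : (fun x => f x * (Polynomial.C (p.coeff 0)).eval x)
            = fun x => (p.coeff 0) * (f x * (PH 0).eval x) := by
          funext x; simp [PH]; ring
        rw [heq, integral_const_mul, h0 0, mul_zero]
      | succ N ih =>
        intro p hp
        by_cases hle : p.natDegree ≤ N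
        · exact ih p hle
        set c : ℝ := p.coeff (N + 1) / 2 ^ (N + 1) with hcdef
        set q : Polynomial ℝ := p - Polynomial.C c * PH (N + 1) with hqdef
        have hPHd := PH_deg (N + 1)
        have hdq : q.natDegree ≤ N := by
          rw [Polynomial.natDegree_le_iff_coeff_eq_zero]
          intro m hm
          rw [hqdef, Polynomial.coeff_sub, Polynomial.coeff_C_mul]
          rcases eq_or_lt_of_le (Nat.succ_le_of_lt hm) with h | h
          · rw [← h, hPHd.2, hcdef]
            field_simp
            simp
          · rw [Polynomial.coeff_eq_zero_of_natDegree_lt (lt_of_le_of_lt hp h),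
              Polynomial.coeff_eq_zero_of_natDegree_lt (by rw [hPHd.1]; exact h)]
            ring
        have hpq : p = q + Polynomial.C c * PH (N + 1) := by
          rw [hqdef]; ring
        have heq : (fun x => f x * p.eval x)
            = fun x => f x * q.eval x + c * (f x * (PH (N + 1)).eval x) := by
          funext x
          conv_lhs => rw [hpq]
          simp only [Polynomial.eval_add, Polynomial.eval_mul, Polynomial.eval_C]
          ring
        rw [heq, integral_add (hint q) ((hint (PH (N + 1))).const_mul c),
          integral_const_mul, ih q hdq, h0 (N + 1), mul_zero, add_zero]
    exact fun p => main p.natDegree p le_rfl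
  -- orthogonality to monomials, on the Lebesgue side
  have hmono : ∀ k : ℕ, ∫ x : ℝ, x ^ k * (f x * gdens x) = 0 := by
    intro k
    have h := hpoly (Polynomial.X ^ k)
    rw [integral_gauss] at h
    rw [← h]
    congr 1
    funext x
    simp only [Polynomial.eval_pow, Polynomial.eval_X]
    ring
  -- set up the complex-valued density
  set g : ℝ → ℂ := fun x => ((f x * gdens x : ℝ) : ℂ) with hgdef
  have hac : (volume : Measure ℝ) ≪ gaussMeasure := by
    refine withDensity_absolutelyContinuous' (gdens_meas.ennreal_ofReal.aemeasurable) ?_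
    filter_upwards with x
    exact (ENNReal.ofReal_pos.mpr (gdens_pos x)).ne'
  have hfm : AEStronglyMeasurable f volume := hf.1.mono_ac hac
  have hfgm : AEStronglyMeasurable (fun x => f x * gdens x) volume :=
    hfm.mul gdens_meas.aestronglyMeasurable
  have hgm : AEStronglyMeasurable g volume :=
    Complex.continuous_ofReal.comp_aestronglyMeasurable hfgm
  have hfg1 : Integrable (fun x => f x * gdens x) volume := by
    rw [← integrable_gauss_iff]
    have h := mul_L2_integrable hf (memℒp_poly 1)
    apply h.congr
    filter_upwards with x
    simp
  have hg1 : Integrable g volume := hfg1.ofReal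
  -- integrability of |f| against exponentials
  have hbound : ∀ c : ℝ, Integrable
      (fun x => Real.exp (c * |x|) * (|f x| * gdens x)) volume := by
    intro c
    have h1 : Integrable (fun x => |f x| * Real.exp (c * |x|)) gaussMeasure := by
      have habs : MemLp (fun x => |f x|) 2 gaussMeasure := by
        have := hf.norm
        simpa [Real.norm_eq_abs] using this
      exact mul_L2_integrable habs (memℒp_exp_abs c)
    rw [integrable_gauss_iff] at h1
    apply h1.congr
    filter_upwards with x
    ring
  -- the Fourier transform of g vanishes
  have hFT : ∀ w : ℝ, 𝓕 g w = 0 := by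
    intro w
    rw [Real.fourier_real_eq_integral_exp_smul]
    set z : ℂ := ((-2 * π * w : ℝ) : ℂ) * Complex.I with hzdef
    set c : ℝ := 2 * π * |w| with hcdef
    have hc0 : 0 ≤ c := by
      have := Real.pi_pos
      rw [hcdef]; positivity
    have hznorm : ‖z‖ = c := by
      rw [hzdef, hcdef, norm_mul, Complex.norm_real, Complex.norm_I, mul_one,
        Real.norm_eq_abs]
      rw [abs_mul, abs_mul]
      simp [abs_of_pos Real.pi_pos]
    set F : ℕ → ℝ → ℂ := fun k x => (z ^ k / k !) * (((x : ℝ) : ℂ) ^ k * g x) with hFdef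
    have hsum : ∀ x : ℝ, Complex.exp (((-2 * π * x * w : ℝ) : ℂ) * Complex.I) • g x
        = ∑' k : ℕ, F k x := by
      intro x
      have harg : ((-2 * π * x * w : ℝ) : ℂ) * Complex.I = z * (x : ℂ) := by
        rw [hzdef]; push_cast; ring
      rw [smul_eq_mul, harg, Complex.exp_eq_exp_ℂ, NormedSpace.exp_eq_tsum_div,
        ← tsum_mul_right]
      congr 1
      funext k
      rw [hFdef, mul_pow]
      ring
    have hFnorm : ∀ k x, ‖F k x‖ = (c * |x|) ^ k / k ! * (|f x| * gdens x) := by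
      intro k x
      rw [hFdef]
      simp only [norm_mul, norm_div, norm_pow, hznorm, Complex.norm_real,
        Complex.norm_natCast, Real.norm_eq_abs, Complex.norm_real]
      rw [hgdef]
      simp only [Complex.norm_real, Real.norm_eq_abs]
      rw [abs_mul, abs_of_pos (gdens_pos x), hcdef]
      ring
    have hFm : ∀ k : ℕ, AEStronglyMeasurable (F k) volume := by
      intro k
      exact (((Complex.continuous_ofReal.pow k).aestronglyMeasurable.mul hgm).const_mul _)
    have hfin : ∑' k : ℕ, ∫⁻ x, ‖F k x‖₊ ∂volume ≠ ⊤ := by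
      have hswap : ∑' k : ℕ, ∫⁻ x, (‖F k x‖₊ : ℝ≥0∞) ∂volume
          = ∫⁻ x, ∑' k : ℕ, (‖F k x‖₊ : ℝ≥0∞) ∂volume :=
        (lintegral_tsum fun k => (hFm k).enorm).symm
      rw [hswap]
      have hpt : ∀ x : ℝ, ∑' k : ℕ, (‖F k x‖₊ : ℝ≥0∞)
          = ENNReal.ofReal (Real.exp (c * |x|) * (|f x| * gdens x)) := by
        intro x
        have h1 : ∀ k : ℕ, (‖F k x‖₊ : ℝ≥0∞) = ENNReal.ofReal (‖F k x‖) := by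
          intro k; rw [ofReal_norm]; rfl
        simp_rw [h1, hFnorm]
        rw [← ENNReal.ofReal_tsum_of_nonneg
          (fun k => mul_nonneg (by positivity)
            (mul_nonneg (abs_nonneg _) (gdens_pos x).le))
          (((Real.summable_pow_div_factorial (c * |x|))).mul_right _)]
        congr 1
        rw [tsum_mul_right]
        congr 1
        rw [Real.exp_eq_exp_ℝ, NormedSpace.exp_eq_tsum_div]
      have : ∫⁻ x, ∑' k : ℕ, (‖F k x‖₊ : ℝ≥0∞) ∂volume
          = ∫⁻ x, ENNReal.ofReal (Real.exp (c * |x|) * (|f x| * gdens x)) ∂volume := by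
        congr 1; funext x; exact hpt x
      rw [this]
      exact (hbound c).lintegral_lt_top.ne
    have hzero : ∀ k : ℕ, ∫ x : ℝ, F k x = 0 := by
      intro k
      rw [hFdef]
      simp only
      rw [MeasureTheory.integral_const_mul]
      have : (fun x : ℝ => ((x : ℝ) : ℂ) ^ k * g x)
          = fun x : ℝ => ((x ^ k * (f x * gdens x) : ℝ) : ℂ) := by
        funext x; rw [hgdef]; push_cast; ring
      have h2 : ∫ x : ℝ, ((x ^ k * (f x * gdens x) : ℝ) : ℂ)
          = ((∫ x : ℝ, x ^ k * (f x * gdens x) : ℝ) : ℂ) := integral_ofReal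
      rw [this, h2, hmono k, Complex.ofReal_zero, mul_zero]
    have heq2 : ∫ v : ℝ, Complex.exp (((-2 * π * v * w : ℝ) : ℂ) * Complex.I) • g v
        = ∫ v : ℝ, ∑' k : ℕ, F k v :=
      integral_congr_ae (Filter.Eventually.of_forall fun x => hsum x)
    rw [show (fun v : ℝ => Complex.exp ((↑(-2 * π * v * w) : ℂ) * Complex.I) • g v)
        = fun v : ℝ => Complex.exp (((-2 * π * v * w : ℝ) : ℂ) * Complex.I) • g v from rfl]
    rw [heq2, integral_tsum hFm hfin]
    simp [hzero]
  -- conclude that g = 0 a.e. via testing against smooth compactly supported functions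
  have hg0 : g =ᵐ[volume] 0 := by
    apply ae_eq_zero_of_integral_contDiff_smul_eq_zero hg1.locallyIntegrable
    intro ψ hψ hψc
    -- the complexification of ψ as a Schwartz function
    have hψcC : HasCompactSupport (fun x : ℝ => ((ψ x : ℝ) : ℂ)) :=
      hψc.comp_left (g := fun r : ℝ => (r : ℂ)) (by simp)
    have hψC : ContDiff ℝ ∞ (fun x : ℝ => ((ψ x : ℝ) : ℂ)) :=
      Complex.ofRealCLM.contDiff.comp hψ
    let Ψ : SchwartzMap ℝ ℂ :=
      { toFun := fun x : ℝ => ((ψ x : ℝ) : ℂ)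
        smooth' := hψC
        decay' := by
          intro k n
          have hsupp : HasCompactSupport
              (fun x : ℝ => ‖x‖ ^ k * ‖iteratedFDeriv ℝ n (fun y : ℝ => ((ψ y : ℝ) : ℂ)) x‖) := by
            apply HasCompactSupport.mul_left
            exact (hψcC.iteratedFDeriv n).norm
          have hcont : Continuous
              (fun x : ℝ => ‖x‖ ^ k * ‖iteratedFDeriv ℝ n (fun y : ℝ => ((ψ y : ℝ) : ℂ)) x‖) :=
            ((continuous_norm.pow k).mul
              ((hψC.continuous_iteratedFDeriv (by exact_mod_cast le_top)).norm))
          obtain ⟨C, hC⟩ := hcont.bounded_above_of_compact_support hsupp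
          refine ⟨C, fun x => ?_⟩
          have h := hC x
          rwa [Real.norm_eq_abs, abs_of_nonneg
            (mul_nonneg (by positivity) (norm_nonneg _))] at h }
    let Φ : SchwartzMap ℝ ℂ := (FourierTransform.fourierCLE ℂ (SchwartzMap ℝ ℂ)).symm Ψ
    have hΦΨ : 𝓕 (⇑Φ) = ⇑Ψ := by
      have h1 := (FourierTransform.fourierCLE ℂ (SchwartzMap ℝ ℂ)).apply_symm_apply Ψ
      have h2 := FourierTransform.fourierCLE_apply (R := ℂ) Φ
      rw [← SchwartzMap.fourier_coe, ← h2, h1]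
    have hflip : (innerₗ ℝ).flip = innerₗ ℝ := by
      apply LinearMap.ext; intro x; apply LinearMap.ext; intro y
      exact real_inner_comm x y
    have hmain := VectorFourier.integral_fourierIntegral_smul_eq_flip
      (L := innerₗ ℝ) Real.continuous_fourierChar continuous_inner hg1 (Φ.integrable (μ := volume))
    -- LHS is zero since 𝓕 g = 0
    have hLHS : ∫ ξ : ℝ, (VectorFourier.fourierIntegral Real.fourierChar volume
        (innerₗ ℝ) g ξ) • (Φ ξ) = 0 := by
      have : ∀ ξ : ℝ, VectorFourier.fourierIntegral Real.fourierChar volume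
          (innerₗ ℝ) g ξ = 0 := fun ξ => hFT ξ
      simp [this]
    rw [hLHS] at hmain
    have hRHS : ∫ x : ℝ, g x • (VectorFourier.fourierIntegral Real.fourierChar volume
        ((innerₗ ℝ).flip) (⇑Φ) x) = ∫ x : ℝ, ψ x • g x := by
      congr 1
      funext x
      rw [hflip]
      have : VectorFourier.fourierIntegral Real.fourierChar volume (innerₗ ℝ) (⇑Φ) x
          = Ψ x := by
        rw [show VectorFourier.fourierIntegral Real.fourierChar volume (innerₗ ℝ) (⇑Φ)
            = 𝓕 (⇑Φ) from rfl, hΦΨ]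
      rw [this]
      show g x • ((ψ x : ℝ) : ℂ) = ψ x • g x
      rw [smul_eq_mul, Complex.real_smul, mul_comm]
    rw [hRHS] at hmain
    exact hmain.symm
  -- unwind: f = 0 a.e. w.r.t. Lebesgue, hence w.r.t. the Gaussian measure
  have hfg0 : (fun x => f x * gdens x) =ᵐ[volume] 0 := by
    filter_upwards [hg0] with x hx
    have : ((f x * gdens x : ℝ) : ℂ) = 0 := hx
    exact_mod_cast this
  have hf0 : f =ᵐ[volume] 0 := by
    filter_upwards [hfg0] with x hx
    have h := gdens_pos x
    have : f x * gdens x = 0 := hx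
    rcases mul_eq_zero.mp this with h1 | h2
    · exact h1
    · exact absurd h2 h.ne'
  exact hf0.filter_mono (withDensity_absolutelyContinuous volume _).ae_le
end

section
/- Let Z be a chi-squared random variable with d degrees of freedom. Then for every u > 0, P[|Z - d| ≥ 2√(du) + 2u] ≤ 2e^{-u} (Laurent–Massart concentration; in particular P[Z - d ≥ 2√(du) + 2u] ≤ e^{-u}). -/
open Real MeasureTheory ProbabilityTheory

open scoped ENNReal NNReal

lemma LM_neg_log_le {x : ℝ} (h0 : 0 ≤ x) (h1 : x < 1) :
    -Real.log (1 - x) ≤ x + x ^ 2 / (2 * (1 - x)) := by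
  have hx : |x| < 1 := by rwa [abs_of_nonneg h0]
  have h := Real.hasSum_pow_div_log_of_abs_lt_one hx
  have h1s : HasSum (fun n : ℕ => x ^ (n + 2) / ((n:ℝ) + 2)) (-Real.log (1 - x) - x) := by
    have h2 := (hasSum_nat_add_iff' (f := fun n : ℕ => x ^ (n + 1) / ((n:ℝ) + 1)) 1).mpr h
    simp only [Finset.range_one, Finset.sum_singleton, Nat.cast_zero, pow_one, zero_add,
      Nat.cast_add, Nat.cast_one] at h2
    have e : (fun n : ℕ => x ^ (n + 2) / ((n:ℝ) + 2)) = fun n : ℕ => x ^ (n + 1 + 1) / ((n:ℝ) + 1 + 1) := by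
      funext n; push_cast; ring_nf
    rw [e, show -Real.log (1 - x) - x = -Real.log (1 - x) - x / 1 by norm_num]
    exact h2
  have hgeom : HasSum (fun n : ℕ => x ^ (n + 2) / 2) (x ^ 2 / 2 * (1 - x)⁻¹) := by
    have hg := (hasSum_geometric_of_lt_one h0 h1).mul_left (x ^ 2 / 2)
    have e : (fun n : ℕ => x ^ (n + 2) / 2) = fun n => x ^ 2 / 2 * x ^ n := by
      funext n; ring
    rw [e]
    exact hg
  have hle : -Real.log (1 - x) - x ≤ x ^ 2 / 2 * (1 - x)⁻¹ := by
    refine hasSum_le (fun n => ?_) h1s hgeom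
    have hxp : (0:ℝ) ≤ x ^ (n + 2) := pow_nonneg h0 _
    have h2 : (2:ℝ) ≤ (n:ℝ) + 2 := by
      have : (0:ℝ) ≤ (n:ℝ) := Nat.cast_nonneg n
      linarith
    exact div_le_div_of_nonneg_left hxp (by norm_num) h2
  have hxx : x ^ 2 / 2 * (1 - x)⁻¹ = x ^ 2 / (2 * (1 - x)) := by
    field_simp
  linarith [hxx ▸ hle]

lemma LM_log_ge {y : ℝ} (h0 : 0 ≤ y) : y - y ^ 2 / 2 ≤ Real.log (1 + y) := by
  set z := y / (1 + y) with hz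
  have hy1 : (0:ℝ) < 1 + y := by linarith
  have hz0 : 0 ≤ z := div_nonneg h0 hy1.le
  have hz1 : z < 1 := by
    rw [hz, div_lt_one hy1]; linarith
  have hzz : 1 - z = (1 + y)⁻¹ := by
    rw [hz]; field_simp; ring
  have h := Real.hasSum_pow_div_log_of_abs_lt_one (x := z) (by rwa [abs_of_nonneg hz0])
  have hsum : z + z ^ 2 / 2 ≤ -Real.log (1 - z) := by
    have h2 := sum_le_hasSum ({0, 1} : Finset ℕ)
      (fun i _ => div_nonneg (pow_nonneg hz0 _) (by positivity)) h
    norm_num at h2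
    convert h2 using 2 <;> norm_num
  rw [hzz, Real.log_inv, neg_neg] at hsum
  have key : (z + z ^ 2 / 2) - (y - y ^ 2 / 2) = y ^ 4 / (2 * (1 + y) ^ 2) := by
    rw [hz]; field_simp; ring
  have hnn : (0:ℝ) ≤ y ^ 4 / (2 * (1 + y) ^ 2) := by positivity
  linarith

lemma LM_pdf_mul {t : ℝ} :
    (fun x : ℝ => gaussianPDFReal 0 1 x * Real.exp (t * x ^ 2))
      = fun x => (Real.sqrt (2 * π))⁻¹ * Real.exp (-(1 / 2 - t) * x ^ 2) := by
  funext x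
  rw [gaussianPDFReal]
  push_cast
  rw [mul_one, mul_assoc, ← Real.exp_add]
  congr 1
  ring

lemma LM_integrable_aux {t : ℝ} (ht : t < 1 / 2) :
    Integrable (fun x : ℝ => gaussianPDFReal 0 1 x * Real.exp (t * x ^ 2)) := by
  rw [LM_pdf_mul]
  exact (integrable_exp_neg_mul_sq (by linarith)).const_mul _

lemma LM_integrable {t : ℝ} (ht : t < 1 / 2) :
    Integrable (fun x : ℝ => Real.exp (t * x ^ 2)) (gaussianReal 0 1) := by
  rw [gaussianReal_of_var_ne_zero 0 one_ne_zero]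
  have hmeas : Measurable fun x : ℝ => (gaussianPDFReal 0 1 x).toNNReal :=
    (measurable_gaussianPDFReal 0 1).real_toNNReal
  rw [show (gaussianPDF 0 1) = fun x => ((gaussianPDFReal 0 1 x).toNNReal : ℝ≥0∞) from rfl]
  rw [integrable_withDensity_iff_integrable_smul hmeas]
  have : (fun x : ℝ => (gaussianPDFReal 0 1 x).toNNReal • Real.exp (t * x ^ 2))
      = fun x => gaussianPDFReal 0 1 x * Real.exp (t * x ^ 2) := by
    funext x
    simp [NNReal.smul_def, Real.coe_toNNReal _ (gaussianPDFReal_nonneg 0 1 x)]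
  rw [this]
  exact LM_integrable_aux ht

lemma LM_mgf_one {t : ℝ} (ht : t < 1 / 2) :
    ∫ x, Real.exp (t * x ^ 2) ∂(gaussianReal 0 1) = (Real.sqrt (1 - 2 * t))⁻¹ := by
  rw [gaussianReal_of_var_ne_zero 0 one_ne_zero]
  have hmeas : Measurable fun x : ℝ => (gaussianPDFReal 0 1 x).toNNReal :=
    (measurable_gaussianPDFReal 0 1).real_toNNReal
  rw [show (gaussianPDF 0 1) = fun x => ((gaussianPDFReal 0 1 x).toNNReal : ℝ≥0∞) from rfl]
  rw [integral_withDensity_eq_integral_smul hmeas]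
  have : (fun x : ℝ => (gaussianPDFReal 0 1 x).toNNReal • Real.exp (t * x ^ 2))
      = fun x => (Real.sqrt (2 * π))⁻¹ * Real.exp (-(1 / 2 - t) * x ^ 2) := by
    rw [← LM_pdf_mul]
    funext x
    simp [NNReal.smul_def, Real.coe_toNNReal _ (gaussianPDFReal_nonneg 0 1 x)]
  rw [this, integral_const_mul, integral_gaussian]
  have hπ : (0:ℝ) < π := Real.pi_pos
  have hb : (0:ℝ) < 1 / 2 - t := by linarith
  have hbb : (0:ℝ) < 1 - 2 * t := by linarith
  rw [← Real.sqrt_inv, ← Real.sqrt_inv, ← Real.sqrt_mul (by positivity : (0:ℝ) ≤ (2*π)⁻¹)]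
  congr 1
  field_simp

lemma LM_exp_sum_eq (d : ℕ) (t : ℝ) :
    (fun g : Fin d → ℝ => Real.exp (t * ∑ i, (g i) ^ 2))
      = fun g => ∏ i, Real.exp (t * (g i) ^ 2) := by
  funext g
  rw [Finset.mul_sum, Real.exp_sum]

lemma LM_int_pi (d : ℕ) {t : ℝ} (ht : t < 1 / 2) :
    Integrable (fun g : Fin d → ℝ => Real.exp (t * ∑ i, (g i) ^ 2))
      (Measure.pi fun _ : Fin d => gaussianReal 0 1) := by
  letI : MeasureSpace ℝ := ⟨gaussianReal 0 1⟩
  haveI : SigmaFinite (volume : Measure ℝ) := inferInstanceAs (SigmaFinite (gaussianReal 0 1))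
  rw [LM_exp_sum_eq]
  exact Integrable.fintype_prod (f := fun _ x => Real.exp (t * x ^ 2)) fun i => LM_integrable ht

lemma LM_mgf_pi (d : ℕ) {t : ℝ} (ht : t < 1 / 2) :
    ∫ g : Fin d → ℝ, Real.exp (t * ∑ i, (g i) ^ 2)
        ∂(Measure.pi fun _ : Fin d => gaussianReal 0 1)
      = ((Real.sqrt (1 - 2 * t))⁻¹) ^ d := by
  letI : MeasureSpace ℝ := ⟨gaussianReal 0 1⟩
  haveI : SigmaFinite (volume : Measure ℝ) := inferInstanceAs (SigmaFinite (gaussianReal 0 1))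
  rw [LM_exp_sum_eq]
  have := MeasureTheory.integral_fintype_prod_volume_eq_pow (ι := Fin d) (fun x : ℝ => Real.exp (t * x ^ 2))
  simp only [Fintype.card_fin] at this
  rw [show (Measure.pi fun _ : Fin d => gaussianReal 0 1) = (volume : Measure (Fin d → ℝ)) from rfl]
  rw [this]
  congr 1
  exact LM_mgf_one ht

lemma LM_sqrt_inv_le {c e : ℝ} (h : c⁻¹ ≤ Real.exp e) : (Real.sqrt c)⁻¹ ≤ Real.exp (e / 2) := by
  rw [← Real.sqrt_inv]
  have h2 : Real.exp e = Real.exp (e / 2) ^ 2 := by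
    rw [sq, ← Real.exp_add]; congr 1; ring
  rw [h2] at h
  calc Real.sqrt c⁻¹ ≤ Real.sqrt (Real.exp (e / 2) ^ 2) := Real.sqrt_le_sqrt h
    _ = Real.exp (e / 2) := Real.sqrt_sq (Real.exp_nonneg _)

lemma LM_exp_bound_upper {t : ℝ} (ht0 : 0 ≤ t) (ht1 : t < 1 / 2) :
    (Real.sqrt (1 - 2 * t))⁻¹ ≤ Real.exp (t + t ^ 2 / (1 - 2 * t)) := by
  have hx0 : (0:ℝ) ≤ 2 * t := by linarith
  have hx1 : 2 * t < 1 := by linarith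
  have hpos : (0:ℝ) < 1 - 2 * t := by linarith
  have hl := LM_neg_log_le hx0 hx1
  have hinv : (1 - 2 * t)⁻¹ ≤ Real.exp (2 * t + (2 * t) ^ 2 / (2 * (1 - 2 * t))) := by
    calc (1 - 2 * t)⁻¹ = Real.exp (Real.log (1 - 2 * t)⁻¹) :=
          (Real.exp_log (by positivity)).symm
      _ = Real.exp (-Real.log (1 - 2 * t)) := by rw [Real.log_inv]
      _ ≤ _ := Real.exp_le_exp.mpr hl
  have := LM_sqrt_inv_le hinv
  refine this.trans_eq ?_
  congr 1
  field_simp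

lemma LM_exp_bound_lower {s : ℝ} (hs : 0 ≤ s) :
    (Real.sqrt (1 + 2 * s))⁻¹ ≤ Real.exp (s ^ 2 - s) := by
  have hy : (0:ℝ) ≤ 2 * s := by linarith
  have hpos : (0:ℝ) < 1 + 2 * s := by linarith
  have hl := LM_log_ge hy
  have hinv : (1 + 2 * s)⁻¹ ≤ Real.exp ((2 * s) ^ 2 / 2 - 2 * s) := by
    calc (1 + 2 * s)⁻¹ = Real.exp (Real.log (1 + 2 * s)⁻¹) :=
          (Real.exp_log (by positivity)).symm
      _ = Real.exp (-Real.log (1 + 2 * s)) := by rw [Real.log_inv]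
      _ ≤ _ := Real.exp_le_exp.mpr (by linarith)
  have := LM_sqrt_inv_le hinv
  refine this.trans_eq ?_
  congr 1
  ring

lemma LM_mgf_eq (d : ℕ) {t : ℝ} (ht : t < 1 / 2) :
    mgf (fun g : Fin d → ℝ => (∑ i, (g i) ^ 2) - d)
        (Measure.pi fun _ : Fin d => gaussianReal 0 1) t
      = ((Real.sqrt (1 - 2 * t))⁻¹) ^ d / Real.exp (t * d) := by
  have hfun : (fun g : Fin d → ℝ => Real.exp (t * ((∑ i, (g i) ^ 2) - d)))
      = fun g => Real.exp (t * ∑ i, (g i) ^ 2) / Real.exp (t * d) := by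
    funext g
    rw [mul_sub, Real.exp_sub]
  simp only [mgf]
  rw [hfun, integral_div, LM_mgf_pi d ht]

lemma LM_int_shift (d : ℕ) {t : ℝ} (ht : t < 1 / 2) :
    Integrable (fun g : Fin d → ℝ => Real.exp (t * ((∑ i, (g i) ^ 2) - d)))
      (Measure.pi fun _ : Fin d => gaussianReal 0 1) := by
  have hfun : (fun g : Fin d → ℝ => Real.exp (t * ((∑ i, (g i) ^ 2) - d)))
      = fun g => Real.exp (t * ∑ i, (g i) ^ 2) / Real.exp (t * d) := by
    funext g
    rw [mul_sub, Real.exp_sub]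
  rw [hfun]
  exact (LM_int_pi d ht).div_const _

lemma LM_upper (d : ℕ) (hd : 0 < d) {u : ℝ} (hu : 0 < u) :
    ((Measure.pi fun _ : Fin d => gaussianReal 0 1)
        {g | 2 * Real.sqrt (d * u) + 2 * u ≤ (∑ i, (g i) ^ 2) - d}).toReal
      ≤ Real.exp (-u) := by
  set w := Real.sqrt d with hw_def
  set v := Real.sqrt u with hv_def
  have hdR : (0:ℝ) < d := by exact_mod_cast hd
  have hw : 0 < w := Real.sqrt_pos.mpr hdR
  have hv : 0 < v := Real.sqrt_pos.mpr hu
  have hw2 : w ^ 2 = d := Real.sq_sqrt hdR.le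
  have hv2 : v ^ 2 = u := Real.sq_sqrt hu.le
  have hsd : Real.sqrt (d * u) = w * v := Real.sqrt_mul hdR.le u
  set t := v / (w + 2 * v) with ht_def
  have hwv : 0 < w + 2 * v := by linarith
  have ht0 : 0 ≤ t := by positivity
  have h1m : 1 - 2 * t = w / (w + 2 * v) := by
    rw [ht_def]; field_simp; ring
  have ht1 : t < 1 / 2 := by
    have : 0 < w / (w + 2 * v) := by positivity
    linarith [h1m ▸ this]
  set a := 2 * Real.sqrt (d * u) + 2 * u with ha_def
  have hcher := measure_ge_le_exp_mul_mgf (μ := Measure.pi fun _ : Fin d => gaussianReal 0 1)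
    (X := fun g : Fin d → ℝ => (∑ i, (g i) ^ 2) - d) a ht0 (LM_int_shift d ht1)
  refine hcher.trans ?_
  rw [LM_mgf_eq d ht1]
  have hb := LM_exp_bound_upper ht0 ht1
  calc Real.exp (-t * a) * (((Real.sqrt (1 - 2 * t))⁻¹) ^ d / Real.exp (t * d))
      ≤ Real.exp (-t * a) * ((Real.exp (t + t ^ 2 / (1 - 2 * t))) ^ d / Real.exp (t * d)) := by
        gcongr
    _ = Real.exp (-t * a + d * (t + t ^ 2 / (1 - 2 * t)) - t * d) := by
        rw [← Real.exp_nat_mul, ← Real.exp_sub, ← Real.exp_add]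
        congr 1
        ring
    _ = Real.exp (-u) := by
        congr 1
        have key : d * (t ^ 2 / (1 - 2 * t)) - t * a = -u := by
          rw [ha_def, hsd, h1m, ht_def, ← hw2, ← hv2]
          field_simp
          ring
        have expand : -t * a + d * (t + t ^ 2 / (1 - 2 * t)) - t * d
            = d * (t ^ 2 / (1 - 2 * t)) - t * a := by ring
        rw [expand, key]

lemma LM_lower (d : ℕ) {u : ℝ} (hu : 0 < u) :
    ((Measure.pi fun _ : Fin d => gaussianReal 0 1)
        {g | (∑ i, (g i) ^ 2) - d ≤ -(2 * Real.sqrt (d * u) + 2 * u)}).toReal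
      ≤ Real.exp (-u) := by
  set a := 2 * Real.sqrt (d * u) + 2 * u with ha_def
  have ha : 0 < a := by
    have := Real.sqrt_nonneg ((d:ℝ) * u)
    rw [ha_def]; linarith
  rcases lt_or_ge (d:ℝ) a with hda | hda
  · -- the set is empty
    have hempty : {g : Fin d → ℝ | (∑ i, (g i) ^ 2) - d ≤ -a} = ∅ := by
      ext g
      simp only [Set.mem_setOf_eq, Set.mem_empty_iff_false, iff_false, not_le]
      have hnn : (0:ℝ) ≤ ∑ i, (g i) ^ 2 := Finset.sum_nonneg fun i _ => sq_nonneg _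
      linarith
    rw [hempty]
    simp [Real.exp_nonneg]
  · have hdR : (0:ℝ) < d := lt_of_lt_of_le ha hda
    set s := a / (2 * d) with hs_def
    have hs : 0 < s := by positivity
    have ht1 : -s < 1 / 2 := by linarith
    have hts : (-s) ≤ 0 := neg_nonpos.mpr hs.le
    have hcher := measure_le_le_exp_mul_mgf (μ := Measure.pi fun _ : Fin d => gaussianReal 0 1)
      (X := fun g : Fin d → ℝ => (∑ i, (g i) ^ 2) - d) (-a) hts (LM_int_shift d ht1)
    refine hcher.trans ?_
    rw [LM_mgf_eq d ht1]
    have hb : (Real.sqrt (1 - 2 * (-s)))⁻¹ ≤ Real.exp (s ^ 2 - s) := by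
      rw [show 1 - 2 * (-s) = 1 + 2 * s by ring]
      exact LM_exp_bound_lower hs.le
    calc Real.exp (-(-s) * -a) * (((Real.sqrt (1 - 2 * (-s)))⁻¹) ^ d / Real.exp ((-s) * d))
        ≤ Real.exp (-(-s) * -a) * ((Real.exp (s ^ 2 - s)) ^ d / Real.exp ((-s) * d)) := by
          gcongr
      _ = Real.exp (-(s * a) + d * (s ^ 2 - s) + s * d) := by
          rw [← Real.exp_nat_mul, ← Real.exp_sub, ← Real.exp_add]
          congr 1
          ring
      _ ≤ Real.exp (-u) := by
          apply Real.exp_le_exp.mpr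
          have hsval : (d:ℝ) * s ^ 2 - s * a = -(a ^ 2 / (4 * d)) := by
            rw [hs_def]; field_simp; ring
          have hsq : Real.sqrt ((d:ℝ) * u) ^ 2 = (d:ℝ) * u := Real.sq_sqrt (by positivity)
          have ha2 : 4 * (d:ℝ) * u ≤ a ^ 2 := by
            rw [ha_def]
            nlinarith [Real.sqrt_nonneg ((d:ℝ) * u), hu.le]
          have hu2 : u ≤ a ^ 2 / (4 * d) := by
            rw [le_div_iff₀ (by positivity)]
            linarith
          nlinarith [hsval, hu2]

/-- Laurent–Massart concentration for a chi-squared random variable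
`Z = Σ_{i<d} g_i²` with `d` degrees of freedom:
`P[|Z - d| ≥ 2√(du) + 2u] ≤ 2 e^{-u}`, and the upper tail satisfies
`P[Z - d ≥ 2√(du) + 2u] ≤ e^{-u}`. -/
theorem laurent_massart (d : ℕ) (u : ℝ) (hu : 0 < u) :
    (Measure.pi fun _ : Fin d => gaussianReal 0 1)
        {g | 2 * Real.sqrt (d * u) + 2 * u ≤ |(∑ i, (g i) ^ 2) - d|}
      ≤ ENNReal.ofReal (2 * Real.exp (-u)) ∧
    (Measure.pi fun _ : Fin d => gaussianReal 0 1)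
        {g | 2 * Real.sqrt (d * u) + 2 * u ≤ (∑ i, (g i) ^ 2) - d}
      ≤ ENNReal.ofReal (Real.exp (-u)) := by
  have hup : (Measure.pi fun _ : Fin d => gaussianReal 0 1)
      {g | 2 * Real.sqrt (d * u) + 2 * u ≤ (∑ i, (g i) ^ 2) - d}
      ≤ ENNReal.ofReal (Real.exp (-u)) := by
    rcases Nat.eq_zero_or_pos d with hd | hd
    · subst hd
      have hempty : {g : Fin 0 → ℝ |
          2 * Real.sqrt ((0:ℕ) * u) + 2 * u ≤ (∑ i, (g i) ^ 2) - (0:ℕ)} = ∅ := by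
        ext g
        simp only [Set.mem_setOf_eq, Set.mem_empty_iff_false, iff_false, not_le,
          Finset.univ_eq_empty, Finset.sum_empty, Nat.cast_zero, zero_mul, Real.sqrt_zero,
          mul_zero, zero_add, sub_zero]
        linarith
      rw [hempty]
      simp
    · have h := LM_upper d hd hu
      have hne := measure_ne_top (Measure.pi fun _ : Fin d => gaussianReal 0 1)
        {g | 2 * Real.sqrt (d * u) + 2 * u ≤ (∑ i, (g i) ^ 2) - d}
      calc (Measure.pi fun _ : Fin d => gaussianReal 0 1)
            {g | 2 * Real.sqrt (d * u) + 2 * u ≤ (∑ i, (g i) ^ 2) - d}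
          = ENNReal.ofReal (((Measure.pi fun _ : Fin d => gaussianReal 0 1)
            {g | 2 * Real.sqrt (d * u) + 2 * u ≤ (∑ i, (g i) ^ 2) - d}).toReal) :=
            (ENNReal.ofReal_toReal hne).symm
        _ ≤ ENNReal.ofReal (Real.exp (-u)) := ENNReal.ofReal_le_ofReal h
  have hlow : (Measure.pi fun _ : Fin d => gaussianReal 0 1)
      {g | (∑ i, (g i) ^ 2) - d ≤ -(2 * Real.sqrt (d * u) + 2 * u)}
      ≤ ENNReal.ofReal (Real.exp (-u)) := by
    have h := LM_lower d hu
    have hne := measure_ne_top (Measure.pi fun _ : Fin d => gaussianReal 0 1)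
      {g | (∑ i, (g i) ^ 2) - d ≤ -(2 * Real.sqrt (d * u) + 2 * u)}
    calc (Measure.pi fun _ : Fin d => gaussianReal 0 1)
          {g | (∑ i, (g i) ^ 2) - d ≤ -(2 * Real.sqrt (d * u) + 2 * u)}
        = ENNReal.ofReal (((Measure.pi fun _ : Fin d => gaussianReal 0 1)
          {g | (∑ i, (g i) ^ 2) - d ≤ -(2 * Real.sqrt (d * u) + 2 * u)}).toReal) :=
          (ENNReal.ofReal_toReal hne).symm
      _ ≤ ENNReal.ofReal (Real.exp (-u)) := ENNReal.ofReal_le_ofReal h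
  refine ⟨?_, hup⟩
  have hsub : {g : Fin d → ℝ | 2 * Real.sqrt (d * u) + 2 * u ≤ |(∑ i, (g i) ^ 2) - d|}
      ⊆ {g | 2 * Real.sqrt (d * u) + 2 * u ≤ (∑ i, (g i) ^ 2) - d}
        ∪ {g | (∑ i, (g i) ^ 2) - d ≤ -(2 * Real.sqrt (d * u) + 2 * u)} := by
    intro g hg
    simp only [Set.mem_setOf_eq, Set.mem_union] at *
    rcases le_abs.mp hg with h | h
    · exact Or.inl h
    · exact Or.inr (by linarith)
  refine le_trans (measure_mono hsub) (le_trans (measure_union_le _ _) ?_)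
  calc _ ≤ ENNReal.ofReal (Real.exp (-u)) + ENNReal.ofReal (Real.exp (-u)) :=
        add_le_add hup hlow
    _ = ENNReal.ofReal (2 * Real.exp (-u)) := by
        rw [← ENNReal.ofReal_add (Real.exp_nonneg _) (Real.exp_nonneg _)]
        congr 1
        ring
end
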